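/- For every permutation π of [q·2^r] there is a setting of the switches and q-permuters of a (q,r)-Benes network realising π: every permutation of [p] with p = q·2^r factors as τ_in ∘ (σ_0 ⊕ σ_1) ∘ τ_out where τ_in, τ_out come from p/2 independent switches pairing i with i + p/2, and σ_0, σ_1 are arbitrary permutations of [p/2]. -/

import Mathlib

/-- The outer layer of switches: input `x` is paired with `x + N` (resp. `x - N`),
and the switch `s` either fixes or swaps each pair. -/
def switchLayer (N : ℕ) (s : Fin N → Bool) : Fin (2 * N) → Fin (2 * N) := fun x =>
  if h : x.val < N then
    if s ⟨x.val, h⟩ then ⟨x.val + N, by omega⟩ else x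
  else
    if s ⟨x.val - N, by have := x.isLt; omega⟩ then
      ⟨x.val - N, by have := x.isLt; omega⟩ else x

/-- The middle layer `σ₀ ⊕ σ₁`: `σ₀` permutes the first half and `σ₁` the second half. -/
def middleLayer (N : ℕ) (σ₀ σ₁ : Equiv.Perm (Fin N)) : Fin (2 * N) → Fin (2 * N) := fun x =>
  if h : x.val < N then ⟨(σ₀ ⟨x.val, h⟩).val, by have := (σ₀ ⟨x.val, h⟩).isLt; omega⟩
  else ⟨(σ₁ ⟨x.val - N, by have := x.isLt; omega⟩).val + N,
    by have := (σ₁ ⟨x.val - N, by have := x.isLt; omega⟩).isLt; omega⟩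

/-- The pairing involution `x ↔ x ± N`. -/
def pairInv (N : ℕ) : Equiv.Perm (Fin (2 * N)) where
  toFun x := if h : x.val < N then ⟨x.val + N, by omega⟩
    else ⟨x.val - N, by have := x.isLt; omega⟩
  invFun x := if h : x.val < N then ⟨x.val + N, by omega⟩
    else ⟨x.val - N, by have := x.isLt; omega⟩
  left_inv x := by
    beta_reduce
    by_cases h : x.val < N
    · rw [dif_pos h, dif_neg (by omega : ¬ (x.val + N < N))]
      ext; simp
    · rw [dif_neg h, dif_pos (show x.val - N < N by have := x.isLt; omega)]
      ext; simp; omega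
  right_inv x := by
    beta_reduce
    by_cases h : x.val < N
    · rw [dif_pos h, dif_neg (by omega : ¬ (x.val + N < N))]
      ext; simp
    · rw [dif_neg h, dif_pos (show x.val - N < N by have := x.isLt; omega)]
      ext; simp; omega

lemma pairInv_lt (N : ℕ) (j : Fin N) :
    pairInv N ⟨j.val, by have := j.isLt; omega⟩ = ⟨j.val + N, by have := j.isLt; omega⟩ := by
  simp only [pairInv, Equiv.coe_fn_mk]
  rw [dif_pos j.isLt]

lemma pairInv_ge (N : ℕ) (j : Fin N) :
    pairInv N ⟨j.val + N, by have := j.isLt; omega⟩ = ⟨j.val, by have := j.isLt; omega⟩ := by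
  simp only [pairInv, Equiv.coe_fn_mk]
  rw [dif_neg (by omega : ¬ (j.val + N < N))]
  simp only [Fin.mk.injEq]
  omega

lemma pairInv_sq (N : ℕ) : pairInv N * pairInv N = 1 :=
  Equiv.ext fun x => (pairInv N).left_inv x

lemma pairInv_ne (N : ℕ) (hN : 0 < N) (x : Fin (2 * N)) : pairInv N x ≠ x := by
  intro h
  have hv := congrArg Fin.val h
  simp only [pairInv, Equiv.coe_fn_mk] at hv
  by_cases h2 : x.val < N
  · rw [dif_pos h2] at hv; simp at hv; omega
  · rw [dif_neg h2] at hv; simp at hv; have := x.isLt; omega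

lemma switchLayer_lt (N : ℕ) (s : Fin N → Bool) (j : Fin N) :
    switchLayer N s ⟨j.val, by have := j.isLt; omega⟩ =
      if s j then ⟨j.val + N, by have := j.isLt; omega⟩
      else ⟨j.val, by have := j.isLt; omega⟩ := by
  simp only [switchLayer]
  rw [dif_pos j.isLt]

lemma switchLayer_ge (N : ℕ) (s : Fin N → Bool) (j : Fin N) :
    switchLayer N s ⟨j.val + N, by have := j.isLt; omega⟩ =
      if s j then ⟨j.val, by have := j.isLt; omega⟩
      else ⟨j.val + N, by have := j.isLt; omega⟩ := by
  simp only [switchLayer]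
  rw [dif_neg (by omega : ¬ (j.val + N < N))]
  have hj : (⟨j.val + N - N, by have := j.isLt; omega⟩ : Fin N) = j := by ext; simp
  rw [hj]
  split_ifs
  · simp only [Fin.mk.injEq]; omega
  · rfl

lemma middleLayer_lt (N : ℕ) (σ₀ σ₁ : Equiv.Perm (Fin N)) (j : Fin N) :
    middleLayer N σ₀ σ₁ ⟨j.val, by have := j.isLt; omega⟩ =
      ⟨(σ₀ j).val, by have := (σ₀ j).isLt; omega⟩ := by
  simp only [middleLayer]
  rw [dif_pos j.isLt]

lemma middleLayer_ge (N : ℕ) (σ₀ σ₁ : Equiv.Perm (Fin N)) (j : Fin N) :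
    middleLayer N σ₀ σ₁ ⟨j.val + N, by have := j.isLt; omega⟩ =
      ⟨(σ₁ j).val + N, by have := (σ₁ j).isLt; omega⟩ := by
  simp only [middleLayer]
  rw [dif_neg (by omega : ¬ (j.val + N < N))]
  have hj : (⟨j.val + N - N, by have := j.isLt; omega⟩ : Fin N) = j := by ext; simp
  simp only [Fin.mk.injEq]
  rw [hj]


lemma exists_two_coloring {S : Type*} [Fintype S] [LinearOrder S]
    (A B : Equiv.Perm S) (hA2 : A * A = 1) (hB2 : B * B = 1)
    (hA : ∀ x, A x ≠ x) (hB : ∀ x, B x ≠ x) :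
    ∃ c : S → Bool, (∀ x, c (A x) = ! c x) ∧ (∀ x, c (B x) = ! c x) := by
  classical
  set g : Equiv.Perm S := A * B with hg
  have hAinv : A⁻¹ = A := inv_eq_of_mul_eq_one_right hA2
  have hBinv : B⁻¹ = B := inv_eq_of_mul_eq_one_right hB2
  have hAg : A * g = B := by rw [hg, ← mul_assoc, hA2, one_mul]
  have hconj : A * g * A⁻¹ = g⁻¹ := by
    rw [hAg, hg, mul_inv_rev, hAinv, hBinv]
  have hconjk : ∀ k : ℤ, A * g ^ k * A⁻¹ = g ^ (-k) := by
    intro k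
    have := map_zpow (MulAut.conj A) g k
    simp only [MulAut.conj_apply] at this
    rw [this, hconj, inv_zpow, ← zpow_neg]
  have hAgk : ∀ (k : ℤ) (x : S), A ((g ^ k) x) = (g ^ (-k)) (A x) := by
    intro k x
    have h := hconjk k
    have : A * g ^ k = g ^ (-k) * A := by
      rw [← h]; group
    calc A ((g ^ k) x) = (A * g ^ k) x := rfl
      _ = (g ^ (-k) * A) x := by rw [this]
      _ = (g ^ (-k)) (A x) := rfl
  have hcomp : ∀ (a b : ℤ) (x : S), (g ^ a) ((g ^ b) x) = (g ^ (a + b)) x := by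
    intro a b x; rw [← Equiv.Perm.mul_apply, ← zpow_add]
  -- same-orbit relation
  let R : S → S → Prop := fun x y => ∃ k : ℤ, (g ^ k) x = y
  have hRrefl : ∀ x, R x x := fun x => ⟨0, by simp⟩
  have hRsymm : ∀ {x y}, R x y → R y x := by
    rintro x y ⟨k, hk⟩; exact ⟨-k, by rw [← hk, hcomp]; simp⟩
  have hRtrans : ∀ {x y z}, R x y → R y z → R x z := by
    rintro x y z ⟨k, hk⟩ ⟨m, hm⟩; exact ⟨m + k, by rw [← hcomp, hk, hm]⟩
  let orbit : S → Finset S := fun x => Finset.univ.filter (fun y => R x y)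
  have hmem : ∀ x y, y ∈ orbit x ↔ R x y := by
    intro x y; simp [orbit]
  have hne : ∀ x, (orbit x).Nonempty := fun x => ⟨x, (hmem x x).2 (hRrefl x)⟩
  let rep : S → S := fun x => (orbit x).min' (hne x)
  have horb_eq : ∀ x y, R x y → orbit x = orbit y := by
    intro x y h
    ext z
    rw [hmem, hmem]
    exact ⟨fun hz => hRtrans (hRsymm h) hz, fun hz => hRtrans h hz⟩
  have hrep_eq : ∀ x y, R x y → rep x = rep y := by
    intro x y h; simp only [rep]; congr 1; exact horb_eq x y h
  have hrep_g : ∀ x, rep (g x) = rep x := by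
    intro x; exact (hrep_eq x (g x) ⟨1, by simp⟩).symm
  have hrepR : ∀ x, R x (rep x) := fun x => (hmem x _).1 ((orbit x).min'_mem (hne x))
  -- the key parity lemma
  have hkey : ∀ x, rep (A x) ≠ rep x := by
    intro x h
    have hR : R x (A x) := by
      have h1 := hrepR x
      have h2 := hrepR (A x)
      rw [h] at h2
      exact hRtrans h1 (hRsymm h2)
    obtain ⟨m, hm⟩ := hR
    rcases Int.even_or_odd m with ⟨n, hn⟩ | ⟨n, hn⟩
    · -- m = n + n : A fixes g^n x
      apply hA ((g ^ n) x)
      rw [hAgk, ← hm, hcomp, show -n + m = n by omega]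
    · -- m = 2n+1 : B fixes g^n x
      apply hB ((g ^ n) x)
      have hBy : ∀ y, B y = A (g y) := by
        intro y; rw [← hAg]; rfl
      rw [hBy]
      have hg1 : g ((g ^ n) x) = (g ^ (n + 1)) x := by
        have := hcomp 1 n x
        simp only [zpow_one] at this
        rw [this, show (1:ℤ) + n = n + 1 by omega]
      rw [hg1, hAgk, ← hm, hcomp, show -(n+1) + m = n by omega]
  refine ⟨fun x => decide (rep x < rep (A x)), ?_, ?_⟩
  · intro x
    have hAA : A (A x) = x := by
      calc A (A x) = (A * A) x := rfl
        _ = x := by rw [hA2]; rfl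
    have hne' := hkey x
    rcases lt_or_gt_of_ne hne' with h | h <;>
      simp [hAA, h, not_lt_of_gt, le_of_lt, not_lt.2 (le_of_lt h)]
  · intro x
    have h1 : rep (B x) = rep (A x) := by
      apply hrep_eq
      refine ⟨1, ?_⟩
      simp only [zpow_one]
      calc g (B x) = (A * B * B) x := rfl
        _ = A x := by rw [mul_assoc, hB2, mul_one]
    have h2 : rep (A (B x)) = rep x := by
      have : A (B x) = g x := rfl
      rw [this, hrep_g]
    show decide (rep (B x) < rep (A (B x))) = !decide (rep x < rep (A x))
    rw [h1, h2]
    have hne' := hkey x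
    rcases lt_or_gt_of_ne hne' with h | h <;>
      simp [h, not_lt_of_gt, le_of_lt, not_lt.2 (le_of_lt h)]

/-- Rearrangeability of the `(q,r)`-Benes network (induction step): for `q > 1`,
`r ≥ 1` and `p = q * 2^r`, every permutation of `[p]` factors as
`τ_in ∘ (σ₀ ⊕ σ₁) ∘ τ_out` where `τ_in, τ_out` come from `p/2` independent
switches pairing `i` with `i + p/2`, and `σ₀, σ₁` are arbitrary permutations
of `[p/2]`. -/
theorem q_benes_rearrangeable (q r : ℕ) (hq : 1 < q) (hr : 1 ≤ r) (N : ℕ)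
    (hN : 2 * N = q * 2 ^ r) (π : Equiv.Perm (Fin (2 * N))) :
    ∃ (sIn sOut : Fin N → Bool) (σ₀ σ₁ : Equiv.Perm (Fin N)),
      ∀ x : Fin (2 * N),
        π x = switchLayer N sIn (middleLayer N σ₀ σ₁ (switchLayer N sOut x)) := by
  classical
  have hN0 : 0 < N := by
    have h2 : 2 ≤ 2 ^ r := by
      calc 2 = 2 ^ 1 := rfl
        _ ≤ 2 ^ r := Nat.pow_le_pow_right (by norm_num) hr
    nlinarith
  set pA : Equiv.Perm (Fin (2 * N)) := pairInv N with hpA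
  set Bp : Equiv.Perm (Fin (2 * N)) := π⁻¹ * pA * π with hBp
  have hA2 : pA * pA = 1 := pairInv_sq N
  have hB2 : Bp * Bp = 1 := by
    rw [hBp]
    calc π⁻¹ * pA * π * (π⁻¹ * pA * π) = π⁻¹ * (pA * pA) * π := by group
      _ = 1 := by rw [hA2]; group
  have hBapp : ∀ x, Bp x = π.symm (pA (π x)) := fun x => rfl
  have hAfpf : ∀ x, pA x ≠ x := pairInv_ne N hN0
  have hBfpf : ∀ x, Bp x ≠ x := by
    intro x h
    rw [hBapp] at h
    apply hAfpf (π x)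
    have := congrArg π h
    rwa [Equiv.apply_symm_apply] at this
  obtain ⟨c, hcA, hcB⟩ := exists_two_coloring pA Bp hA2 hB2 hAfpf hBfpf
  let lo : Fin N → Fin (2 * N) := fun j => ⟨j.val, by have := j.isLt; omega⟩
  let hi : Fin N → Fin (2 * N) := fun j => ⟨j.val + N, by have := j.isLt; omega⟩
  have hc_hi : ∀ j : Fin N, c (hi j) = ! c (lo j) := by
    intro j
    have := hcA (lo j)
    rwa [show pA (lo j) = hi j from pairInv_lt N j] at this
  let low : Fin (2 * N) → Fin N := fun x =>
    if h : x.val < N then ⟨x.val, h⟩ else ⟨x.val - N, by have := x.isLt; omega⟩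
  have hlow_lo : ∀ j, low (lo j) = j := by
    intro j; simp only [low, lo]; rw [dif_pos j.isLt]
  have hlow_hi : ∀ j, low (hi j) = j := by
    intro j; simp only [low, hi]
    rw [dif_neg (by omega : ¬ (j.val + N < N))]
    ext; simp
  have hsplit : ∀ x : Fin (2 * N), x = lo (low x) ∨ x = hi (low x) := by
    intro x
    by_cases h : x.val < N
    · left; simp only [low, lo]; rw [dif_pos h]
    · right; simp only [low, hi]; rw [dif_neg h]
      ext; simp; have := x.isLt; omega
  let tE : Fin N → Fin (2 * N) := fun j => if c (lo j) then lo j else hi j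
  let fE : Fin N → Fin (2 * N) := fun j => if c (lo j) then hi j else lo j
  have hcT : ∀ j, c (tE j) = true := by
    intro j; simp only [tE]
    by_cases h : c (lo j) <;> simp [h, hc_hi j]
  have hcF : ∀ j, c (fE j) = false := by
    intro j; simp only [fE]
    by_cases h : c (lo j) <;> simp [h, hc_hi j]
  have hlowT : ∀ j, low (tE j) = j := by
    intro j; simp only [tE]; split_ifs <;> [exact hlow_lo j; exact hlow_hi j]
  have hlowF : ∀ j, low (fE j) = j := by
    intro j; simp only [fE]; split_ifs <;> [exact hlow_hi j; exact hlow_lo j]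
  have hTx : ∀ x, c x = true → tE (low x) = x := by
    intro x hx
    rcases hsplit x with h | h
    · simp only [tE]
      rw [if_pos (show c (lo (low x)) = true by rw [← h]; exact hx)]
      exact h.symm
    · simp only [tE]
      have h1 := hc_hi (low x)
      rw [← h, hx] at h1
      rw [if_neg (fun hcl => by rw [hcl] at h1; simp at h1)]
      exact h.symm
  have hFx : ∀ x, c x = false → fE (low x) = x := by
    intro x hx
    rcases hsplit x with h | h
    · simp only [fE]
      rw [if_neg (show ¬ c (lo (low x)) = true by rw [← h, hx]; simp)]
      exact h.symm
    · simp only [fE]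
      have h1 := hc_hi (low x)
      rw [← h, hx] at h1
      have h2 : c (lo (low x)) = true := by
        cases hcl : c (lo (low x))
        · rw [hcl] at h1; simp at h1
        · rfl
      rw [if_pos h2]
      exact h.symm
  have hlow_cases : ∀ y y' : Fin (2 * N), low y = low y' → y = y' ∨ y = pA y' := by
    intro y y' h
    rcases hsplit y with h1 | h1 <;> rcases hsplit y' with h2 | h2
    · left
      calc y = lo (low y) := h1
        _ = lo (low y') := by rw [h]
        _ = y' := h2.symm
    · right
      calc y = lo (low y) := h1
        _ = lo (low y') := by rw [h]
        _ = pA (hi (low y')) := (pairInv_ge N (low y')).symm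
        _ = pA y' := by rw [← h2]
    · right
      calc y = hi (low y) := h1
        _ = hi (low y') := by rw [h]
        _ = pA (lo (low y')) := (pairInv_lt N (low y')).symm
        _ = pA y' := by rw [← h2]
    · left
      calc y = hi (low y) := h1
        _ = hi (low y') := by rw [h]
        _ = y' := h2.symm
  let σ₀' : Fin N → Fin N := fun j => low (π (tE j))
  let σ₁' : Fin N → Fin N := fun j => low (π (fE j))
  have hinj : ∀ (E : Fin N → Fin (2 * N)) (b : Bool), (∀ j, c (E j) = b) → (∀ j, low (E j) = j) →
      Function.Injective (fun j => low (π (E j))) := by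
    intro E b hcE hlowE a a' h
    rcases hlow_cases _ _ h with h1 | h1
    · have := π.injective h1
      rw [← hlowE a, ← hlowE a', this]
    · exfalso
      have hEa : E a = Bp (E a') := by
        rw [hBapp, ← h1, Equiv.symm_apply_apply]
      have hc1 := hcB (E a')
      rw [← hEa, hcE a, hcE a'] at hc1
      cases b <;> simp at hc1
  have hσ₀inj : Function.Injective σ₀' := hinj tE true hcT hlowT
  have hσ₁inj : Function.Injective σ₁' := hinj fE false hcF hlowF
  let σ₀ : Equiv.Perm (Fin N) := Equiv.ofBijective σ₀' (Finite.injective_iff_bijective.mp hσ₀inj)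
  let σ₁ : Equiv.Perm (Fin N) := Equiv.ofBijective σ₁' (Finite.injective_iff_bijective.mp hσ₁inj)
  have hσ₀app : ∀ j, σ₀ j = σ₀' j := fun j => rfl
  have hσ₁app : ∀ j, σ₁ j = σ₁' j := fun j => rfl
  let sOut : Fin N → Bool := fun j => ! c (lo j)
  let sIn : Fin N → Bool := fun j => ! c (π.symm (lo j))
  refine ⟨sIn, sOut, σ₀, σ₁, ?_⟩
  intro x
  have hstep1 : switchLayer N sOut x = if c x then lo (low x) else hi (low x) := by
    rcases hsplit x with h | h
    · conv_lhs => rw [h]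
      rw [show switchLayer N sOut (lo (low x)) = _ from switchLayer_lt N sOut (low x)]
      have hcl : c (lo (low x)) = c x := by rw [← h]
      show (if sOut (low x) = true then hi (low x) else lo (low x)) = _
      simp only [sOut, hcl]
      cases hc : c x <;> simp [hc]
    · conv_lhs => rw [h]
      rw [show switchLayer N sOut (hi (low x)) = _ from switchLayer_ge N sOut (low x)]
      have hcl : c (lo (low x)) = ! c x := by
        conv_rhs => rw [h]
        rw [hc_hi (low x), Bool.not_not]
      show (if sOut (low x) = true then lo (low x) else hi (low x)) = _
      simp only [sOut, hcl, Bool.not_not]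
  set j : Fin N := low (π x) with hj
  have hπsplit : π x = lo j ∨ π x = hi j := hsplit (π x)
  have hstep2 : middleLayer N σ₀ σ₁ (switchLayer N sOut x) = if c x then lo j else hi j := by
    rw [hstep1]
    by_cases hc : c x
    · rw [if_pos hc, if_pos hc]
      rw [show middleLayer N σ₀ σ₁ (lo (low x)) = _ from middleLayer_lt N σ₀ σ₁ (low x)]
      simp only [hσ₀app]
      simp only [σ₀', hTx x hc]
      try rfl
    · rw [if_neg hc, if_neg hc]
      rw [show middleLayer N σ₀ σ₁ (hi (low x)) = _ from middleLayer_ge N σ₀ σ₁ (low x)]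
      simp only [hσ₁app]
      simp only [σ₁', hFx x (by simpa using hc)]
      try rfl
  rw [hstep2]
  by_cases hc : c x
  · rw [if_pos hc]
    rw [show switchLayer N sIn (lo j) = _ from switchLayer_lt N sIn j]
    rcases hπsplit with h | h
    · have hsym : π.symm (lo j) = x := by rw [← h, Equiv.symm_apply_apply]
      have hs : sIn j = false := by simp [sIn, hsym, hc]
      rw [hs]
      simpa using h
    · have hsym : π.symm (lo j) = Bp x := by
        rw [hBapp, show pA (π x) = lo j by rw [h]; exact pairInv_ge N j]
      have hs : sIn j = true := by simp [sIn, hsym, hcB x, hc]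
      rw [hs]
      simpa using h
  · rw [if_neg hc]
    rw [show switchLayer N sIn (hi j) = _ from switchLayer_ge N sIn j]
    rw [Bool.not_eq_true] at hc
    rcases hπsplit with h | h
    · have hsym : π.symm (lo j) = x := by rw [← h, Equiv.symm_apply_apply]
      have hs : sIn j = true := by simp [sIn, hsym, hc]
      rw [hs]
      simpa using h
    · have hsym : π.symm (lo j) = Bp x := by
        rw [hBapp, show pA (π x) = lo j by rw [h]; exact pairInv_ge N j]
      have hs : sIn j = false := by simp [sIn, hsym, hcB x, hc]
      rw [hs]
      simpa using h
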